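/- For all natural numbers n and k with k ≤ n, the number of abelian squares (w, w') of size n over a 3-letter alphabet such that there are exactly n−k positions in which both w and w' have the letter 1 equals C(n,k) · ∑_{j=0}^{k} C(k,j)^3. Formally: the number of pairs of words w, w' : Fin n → Fin 3 such that every letter c ∈ Fin 3 occurs equally often in w and in w', and the number of positions i with w(i) = 0 and w'(i) = 0 is n−k, equals C(n,k) · ∑_{j=0}^{k} C(k,j)^3. -/

import Mathlib

open Finset

def recA : Bool → Bool → Bool → Fin 3
  | true, true, true => 1
  | true, true, false => 0
  | true, false, true => 1
  | true, false, false => 0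
  | false, true, true => 2
  | false, true, false => 2
  | false, false, true => 1
  | false, false, false => 2

def recB : Bool → Bool → Bool → Fin 3
  | true, true, true => 1
  | true, true, false => 1
  | true, false, true => 2
  | true, false, false => 2
  | false, true, true => 0
  | false, true, false => 1
  | false, false, true => 0
  | false, false, false => 2

lemma pointA : ∀ a b : Fin 3, ¬(a = 0 ∧ b = 0) →
    recA (decide (a ≠ 2 ∧ b ≠ 0)) (decide (b = 1 ∨ (a = 2 ∧ b = 0)))
      (decide (a = 1 ∨ (a = 2 ∧ b = 0))) = a := by decide

lemma pointB : ∀ a b : Fin 3, ¬(a = 0 ∧ b = 0) →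
    recB (decide (a ≠ 2 ∧ b ≠ 0)) (decide (b = 1 ∨ (a = 2 ∧ b = 0)))
      (decide (a = 1 ∨ (a = 2 ∧ b = 0))) = b := by decide

lemma pointS : ∀ x y z : Bool, ¬(recA x y z = 0 ∧ recB x y z = 0) := by decide
lemma pointX : ∀ x y z : Bool, ((recA x y z ≠ 2 ∧ recB x y z ≠ 0) ↔ x = true) := by decide
lemma pointY : ∀ x y z : Bool,
    ((recB x y z = 1 ∨ (recA x y z = 2 ∧ recB x y z = 0)) ↔ y = true) := by decide
lemma pointZ : ∀ x y z : Bool,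
    ((recA x y z = 1 ∨ (recA x y z = 2 ∧ recB x y z = 0)) ↔ z = true) := by decide

lemma pointHX : ∀ a b : Fin 3, (a ≠ 2 ∧ b ≠ 0) → ¬(a = 0 ∧ b = 0) := by decide
lemma pointHY : ∀ a b : Fin 3, (b = 1 ∨ (a = 2 ∧ b = 0)) → ¬(a = 0 ∧ b = 0) := by decide
lemma pointHZ : ∀ a b : Fin 3, (a = 1 ∨ (a = 2 ∧ b = 0)) → ¬(a = 0 ∧ b = 0) := by decide

lemma card_filter_comp {α β : Type*} [Fintype α] [DecidableEq β] [Fintype β]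
    (f : α → β) (P : β → Prop) [DecidablePred P] :
    (univ.filter fun a => P (f a)).card
      = ∑ v : β, if P v then (univ.filter fun a => f a = v).card else 0 := by
  rw [← Finset.sum_filter]
  rw [Finset.card_eq_sum_card_fiberwise (f := f) (t := univ.filter P)
    (by intro x hx; simp only [Finset.coe_filter, Set.mem_setOf_eq, mem_coe, mem_filter, mem_univ, true_and] at hx ⊢; exact hx)]
  refine Finset.sum_congr rfl fun v hv => ?_
  simp only [mem_filter, mem_univ, true_and] at hv
  congr 1
  ext a
  simp only [mem_filter, mem_univ, true_and, and_iff_right_iff_imp]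
  rintro rfl; exact hv

lemma triple_count {α : Type*} [DecidableEq α] [Fintype α] (C : Finset α) :
    (univ.filter fun q : Finset α × Finset α × Finset α =>
      q.1 ⊆ C ∧ q.2.1 ⊆ C ∧ q.2.2 ⊆ C ∧ q.1.card = q.2.1.card ∧ q.2.1.card = q.2.2.card).card
    = ∑ j ∈ range (C.card + 1), (C.card.choose j)^3 := by
  rw [Finset.card_eq_sum_card_fiberwise (f := fun q => q.1.card) (t := range (C.card+1))
    (by intro q hq; simp only [Finset.coe_filter, Set.mem_setOf_eq, mem_coe, mem_filter, mem_univ, true_and] at hq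
        exact mem_range.mpr (Nat.lt_succ_of_le (card_le_card hq.1)))]
  refine sum_congr rfl fun j hj => ?_
  have : ((univ.filter fun q : Finset α × Finset α × Finset α =>
      q.1 ⊆ C ∧ q.2.1 ⊆ C ∧ q.2.2 ⊆ C ∧ q.1.card = q.2.1.card ∧ q.2.1.card = q.2.2.card).filter
        fun q => q.1.card = j)
      = (C.powersetCard j) ×ˢ (C.powersetCard j) ×ˢ (C.powersetCard j) := by
    ext q
    simp only [mem_filter, mem_univ, true_and, mem_product, Finset.mem_powersetCard]
    constructor
    · rintro ⟨⟨h1, h2, h3, h4, h5⟩, h6⟩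
      exact ⟨⟨h1, h6⟩, ⟨h2, h4 ▸ h6⟩, ⟨h3, h5 ▸ h4 ▸ h6⟩⟩
    · rintro ⟨⟨h1, h6⟩, ⟨h2, h4⟩, ⟨h3, h5⟩⟩
      exact ⟨⟨h1, h2, h3, by omega⟩, h6⟩
  rw [this, card_product, card_product, Finset.card_powersetCard]
  ring

lemma target_count (n k : ℕ) (hk : k ≤ n) :
    (univ.filter fun q : Finset (Fin n) × Finset (Fin n) × Finset (Fin n) × Finset (Fin n) =>
      q.1.card = n - k ∧ q.2.1 ⊆ q.1ᶜ ∧ q.2.2.1 ⊆ q.1ᶜ ∧ q.2.2.2 ⊆ q.1ᶜ ∧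
      q.2.1.card = q.2.2.1.card ∧ q.2.2.1.card = q.2.2.2.card).card
    = n.choose k * ∑ j ∈ range (k+1), (k.choose j)^3 := by
  rw [Finset.card_eq_sum_card_fiberwise (f := fun q => q.1)
      (t := Finset.univ.powersetCard (n-k))
    (by intro q hq; simp only [Finset.coe_filter, Set.mem_setOf_eq, mem_coe, mem_filter, mem_univ, true_and] at hq
        simp [Finset.mem_powersetCard, hq.1])]
  have key : ∀ S ∈ Finset.univ.powersetCard (n-k),
      (((univ.filter fun q : Finset (Fin n) × Finset (Fin n) × Finset (Fin n) × Finset (Fin n) =>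
      q.1.card = n - k ∧ q.2.1 ⊆ q.1ᶜ ∧ q.2.2.1 ⊆ q.1ᶜ ∧ q.2.2.2 ⊆ q.1ᶜ ∧
      q.2.1.card = q.2.2.1.card ∧ q.2.2.1.card = q.2.2.2.card).filter fun q => q.1 = S).card)
      = ∑ j ∈ range (k+1), (k.choose j)^3 := by
    intro S hS
    simp only [Finset.mem_powersetCard_univ] at hS
    have hSc : Sᶜ.card = k := by
      rw [Finset.card_compl, hS, Fintype.card_fin]; omega
    have hbij : (((univ.filter fun q : Finset (Fin n) × Finset (Fin n) × Finset (Fin n) × Finset (Fin n) =>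
      q.1.card = n - k ∧ q.2.1 ⊆ q.1ᶜ ∧ q.2.2.1 ⊆ q.1ᶜ ∧ q.2.2.2 ⊆ q.1ᶜ ∧
      q.2.1.card = q.2.2.1.card ∧ q.2.2.1.card = q.2.2.2.card).filter fun q => q.1 = S).card)
      = (univ.filter fun q : Finset (Fin n) × Finset (Fin n) × Finset (Fin n) =>
      q.1 ⊆ Sᶜ ∧ q.2.1 ⊆ Sᶜ ∧ q.2.2 ⊆ Sᶜ ∧ q.1.card = q.2.1.card ∧ q.2.1.card = q.2.2.card).card := by
      apply Finset.card_nbij' (i := fun q => q.2) (j := fun r => (S, r))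
      · rintro ⟨S', X, Y, Z⟩ hq
        simp only [Finset.coe_filter, Set.mem_setOf_eq, mem_coe, mem_filter, mem_univ, true_and] at hq ⊢
        obtain ⟨⟨h1, h2, h3, h4, h5, h6⟩, rfl⟩ := hq
        exact ⟨h2, h3, h4, h5, h6⟩
      · rintro ⟨X, Y, Z⟩ hr
        simp only [Finset.coe_filter, Set.mem_setOf_eq, mem_coe, mem_filter, mem_univ, true_and] at hr ⊢
        exact ⟨⟨hS, hr.1, hr.2.1, hr.2.2.1, hr.2.2.2.1, hr.2.2.2.2⟩, trivial⟩
      · rintro ⟨S', X, Y, Z⟩ hq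
        simp only [Finset.coe_filter, Set.mem_setOf_eq, mem_coe, mem_filter, mem_univ, true_and] at hq
        simp [hq.2]
      · rintro ⟨X, Y, Z⟩ _; rfl
    rw [hbij, triple_count, hSc]
  rw [Finset.sum_congr rfl key, Finset.sum_const, Finset.card_powersetCard,
    Finset.card_univ, Fintype.card_fin, smul_eq_mul, Nat.choose_symm hk]

lemma counts_XYZ {n : ℕ} (w w' : Fin n → Fin 3)
    (hc : ∀ c : Fin 3, (univ.filter (fun i => w i = c)).card
      = (univ.filter (fun i => w' i = c)).card) :
    (univ.filter fun i => w i ≠ 2 ∧ w' i ≠ 0).card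
        = (univ.filter fun i => w' i = 1 ∨ (w i = 2 ∧ w' i = 0)).card ∧
    (univ.filter fun i => w' i = 1 ∨ (w i = 2 ∧ w' i = 0)).card
        = (univ.filter fun i => w i = 1 ∨ (w i = 2 ∧ w' i = 0)).card := by
  have key : ∀ (P : Fin 3 × Fin 3 → Prop) (_ : DecidablePred P),
      (univ.filter fun i => P (w i, w' i)).card
        = ∑ v : Fin 3 × Fin 3, if P v then (univ.filter fun i => (w i, w' i) = v).card else 0 :=
    fun P hP => card_filter_comp _ P
  have h0 := hc 0
  have h1 := hc 1
  have h2 := hc 2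
  have e1 : ∀ c : Fin 3, (univ.filter (fun i => w i = c)).card
      = ∑ v : Fin 3 × Fin 3, if v.1 = c then (univ.filter fun i => (w i, w' i) = v).card else 0 :=
    fun c => key (fun v => v.1 = c) (by infer_instance)
  have e2 : ∀ c : Fin 3, (univ.filter (fun i => w' i = c)).card
      = ∑ v : Fin 3 × Fin 3, if v.2 = c then (univ.filter fun i => (w i, w' i) = v).card else 0 :=
    fun c => key (fun v => v.2 = c) (by infer_instance)
  have eX : (univ.filter fun i => w i ≠ 2 ∧ w' i ≠ 0).card
      = ∑ v : Fin 3 × Fin 3, if v.1 ≠ 2 ∧ v.2 ≠ 0 then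
          (univ.filter fun i => (w i, w' i) = v).card else 0 :=
    key (fun v => v.1 ≠ 2 ∧ v.2 ≠ 0) (by infer_instance)
  have eY : (univ.filter fun i => w' i = 1 ∨ (w i = 2 ∧ w' i = 0)).card
      = ∑ v : Fin 3 × Fin 3, if v.2 = 1 ∨ (v.1 = 2 ∧ v.2 = 0) then
          (univ.filter fun i => (w i, w' i) = v).card else 0 :=
    key (fun v => v.2 = 1 ∨ (v.1 = 2 ∧ v.2 = 0)) (by infer_instance)
  have eZ : (univ.filter fun i => w i = 1 ∨ (w i = 2 ∧ w' i = 0)).card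
      = ∑ v : Fin 3 × Fin 3, if v.1 = 1 ∨ (v.1 = 2 ∧ v.2 = 0) then
          (univ.filter fun i => (w i, w' i) = v).card else 0 :=
    key (fun v => v.1 = 1 ∨ (v.1 = 2 ∧ v.2 = 0)) (by infer_instance)
  rw [e1, e2] at h0 h1 h2
  rw [eX, eY, eZ]
  simp (config := { decide := true }) only [Fintype.sum_prod_type, Fin.sum_univ_three,
    if_true, if_false] at h0 h1 h2 ⊢
  omega

lemma counts_w {n : ℕ} (S X Y Z : Finset (Fin n)) (hX : X ⊆ Sᶜ) (hY : Y ⊆ Sᶜ) (hZ : Z ⊆ Sᶜ)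
    (hXY : X.card = Y.card) (hYZ : Y.card = Z.card) (c : Fin 3) :
    (univ.filter fun i => (if i ∈ S then (0 : Fin 3) else
        recA (decide (i ∈ X)) (decide (i ∈ Y)) (decide (i ∈ Z))) = c).card
    = (univ.filter fun i => (if i ∈ S then (0 : Fin 3) else
        recB (decide (i ∈ X)) (decide (i ∈ Y)) (decide (i ∈ Z))) = c).card := by
  set f : Fin n → Bool × Bool × Bool × Bool :=
    fun i => (decide (i ∈ S), decide (i ∈ X), decide (i ∈ Y), decide (i ∈ Z)) with hf
  have key : ∀ (P : Bool × Bool × Bool × Bool → Prop) (_ : DecidablePred P),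
      (univ.filter fun i => P (f i)).card
        = ∑ v : Bool × Bool × Bool × Bool, if P v then (univ.filter fun i => f i = v).card else 0 :=
    fun P hP => card_filter_comp f P
  have eW : (univ.filter fun i => (if i ∈ S then (0 : Fin 3) else
        recA (decide (i ∈ X)) (decide (i ∈ Y)) (decide (i ∈ Z))) = c)
      = (univ.filter fun i =>
          (if (f i).1 = true then (0 : Fin 3) else recA (f i).2.1 (f i).2.2.1 (f i).2.2.2) = c) := by
    apply filter_congr; intro i _
    by_cases h : i ∈ S <;> simp [hf, h]
  have eW' : (univ.filter fun i => (if i ∈ S then (0 : Fin 3) else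
        recB (decide (i ∈ X)) (decide (i ∈ Y)) (decide (i ∈ Z))) = c)
      = (univ.filter fun i =>
          (if (f i).1 = true then (0 : Fin 3) else recB (f i).2.1 (f i).2.2.1 (f i).2.2.2) = c) := by
    apply filter_congr; intro i _
    by_cases h : i ∈ S <;> simp [hf, h]
  have cX : X.card = (univ.filter fun i => (f i).2.1 = true).card := by
    congr 1; ext i; simp [hf]
  have cY : Y.card = (univ.filter fun i => (f i).2.2.1 = true).card := by
    congr 1; ext i; simp [hf]
  have cZ : Z.card = (univ.filter fun i => (f i).2.2.2 = true).card := by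
    congr 1; ext i; simp [hf]
  have dX : (univ.filter fun i => (f i).1 = true ∧ (f i).2.1 = true).card = 0 := by
    rw [Finset.card_eq_zero, filter_eq_empty_iff]
    intro i _; simp only [hf, decide_eq_true_eq]
    rintro ⟨h1, h2⟩; exact (Finset.mem_compl.mp (hX h2)) h1
  have dY : (univ.filter fun i => (f i).1 = true ∧ (f i).2.2.1 = true).card = 0 := by
    rw [Finset.card_eq_zero, filter_eq_empty_iff]
    intro i _; simp only [hf, decide_eq_true_eq]
    rintro ⟨h1, h2⟩; exact (Finset.mem_compl.mp (hY h2)) h1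
  have dZ : (univ.filter fun i => (f i).1 = true ∧ (f i).2.2.2 = true).card = 0 := by
    rw [Finset.card_eq_zero, filter_eq_empty_iff]
    intro i _; simp only [hf, decide_eq_true_eq]
    rintro ⟨h1, h2⟩; exact (Finset.mem_compl.mp (hZ h2)) h1
  have gA : (univ.filter fun i =>
        (if (f i).1 = true then (0 : Fin 3) else recA (f i).2.1 (f i).2.2.1 (f i).2.2.2) = c).card
      = ∑ v : Bool × Bool × Bool × Bool,
          if (if v.1 = true then (0 : Fin 3) else recA v.2.1 v.2.2.1 v.2.2.2) = c
          then (univ.filter fun i => f i = v).card else 0 :=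
    key (fun v => (if v.1 = true then (0:Fin 3) else recA v.2.1 v.2.2.1 v.2.2.2) = c) (by infer_instance)
  have gB : (univ.filter fun i =>
        (if (f i).1 = true then (0 : Fin 3) else recB (f i).2.1 (f i).2.2.1 (f i).2.2.2) = c).card
      = ∑ v : Bool × Bool × Bool × Bool,
          if (if v.1 = true then (0 : Fin 3) else recB v.2.1 v.2.2.1 v.2.2.2) = c
          then (univ.filter fun i => f i = v).card else 0 :=
    key (fun v => (if v.1 = true then (0:Fin 3) else recB v.2.1 v.2.2.1 v.2.2.2) = c) (by infer_instance)
  have gX : (univ.filter fun i => (f i).2.1 = true).card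
      = ∑ v : Bool × Bool × Bool × Bool, if v.2.1 = true then (univ.filter fun i => f i = v).card else 0 :=
    key (fun v => v.2.1 = true) (by infer_instance)
  have gY : (univ.filter fun i => (f i).2.2.1 = true).card
      = ∑ v : Bool × Bool × Bool × Bool, if v.2.2.1 = true then (univ.filter fun i => f i = v).card else 0 :=
    key (fun v => v.2.2.1 = true) (by infer_instance)
  have gZ : (univ.filter fun i => (f i).2.2.2 = true).card
      = ∑ v : Bool × Bool × Bool × Bool, if v.2.2.2 = true then (univ.filter fun i => f i = v).card else 0 :=
    key (fun v => v.2.2.2 = true) (by infer_instance)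
  have gdX : (univ.filter fun i => (f i).1 = true ∧ (f i).2.1 = true).card
      = ∑ v : Bool × Bool × Bool × Bool, if v.1 = true ∧ v.2.1 = true then (univ.filter fun i => f i = v).card else 0 :=
    key (fun v => v.1 = true ∧ v.2.1 = true) (by infer_instance)
  have gdY : (univ.filter fun i => (f i).1 = true ∧ (f i).2.2.1 = true).card
      = ∑ v : Bool × Bool × Bool × Bool, if v.1 = true ∧ v.2.2.1 = true then (univ.filter fun i => f i = v).card else 0 :=
    key (fun v => v.1 = true ∧ v.2.2.1 = true) (by infer_instance)
  have gdZ : (univ.filter fun i => (f i).1 = true ∧ (f i).2.2.2 = true).card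
      = ∑ v : Bool × Bool × Bool × Bool, if v.1 = true ∧ v.2.2.2 = true then (univ.filter fun i => f i = v).card else 0 :=
    key (fun v => v.1 = true ∧ v.2.2.2 = true) (by infer_instance)
  rw [eW, eW', gA, gB]
  rw [gX] at cX; rw [gY] at cY; rw [gZ] at cZ
  rw [gdX] at dX; rw [gdY] at dY; rw [gdZ] at dZ
  rw [hXY, hYZ] at cX
  rw [hYZ] at cY
  fin_cases c <;>
  · simp (config := { decide := true }) only [Fintype.sum_prod_type, Fintype.sum_bool,
      if_true, if_false] at cX cY cZ dX dY dZ ⊢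
    omega

theorem abelian_squares_count_by_common_ones (n k : ℕ) (hk : k ≤ n) :
    ((Finset.univ : Finset ((Fin n → Fin 3) × (Fin n → Fin 3))).filter (fun p =>
        (∀ c : Fin 3,
          (Finset.univ.filter (fun i => p.1 i = c)).card
            = (Finset.univ.filter (fun i => p.2 i = c)).card) ∧
        (Finset.univ.filter (fun i => p.1 i = 0 ∧ p.2 i = 0)).card = n - k)).card
      = n.choose k * ∑ j ∈ range (k + 1), (k.choose j) ^ 3 := by
  rw [← target_count n k hk]
  apply Finset.card_nbij'
    (i := fun p => (univ.filter (fun i => p.1 i = 0 ∧ p.2 i = 0),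
        univ.filter (fun i => p.1 i ≠ 2 ∧ p.2 i ≠ 0),
        univ.filter (fun i => p.2 i = 1 ∨ (p.1 i = 2 ∧ p.2 i = 0)),
        univ.filter (fun i => p.1 i = 1 ∨ (p.1 i = 2 ∧ p.2 i = 0))))
    (j := fun q => ((fun i => if i ∈ q.1 then (0 : Fin 3) else
          recA (decide (i ∈ q.2.1)) (decide (i ∈ q.2.2.1)) (decide (i ∈ q.2.2.2))),
        (fun i => if i ∈ q.1 then (0 : Fin 3) else
          recB (decide (i ∈ q.2.1)) (decide (i ∈ q.2.2.1)) (decide (i ∈ q.2.2.2)))))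
  · rintro ⟨w, w'⟩ hp
    simp only [Finset.coe_filter, Set.mem_setOf_eq, mem_coe, mem_filter, mem_univ, true_and] at hp ⊢
    obtain ⟨hc, hS⟩ := hp
    obtain ⟨hXY, hYZ⟩ := counts_XYZ w w' hc
    refine ⟨hS, ?_, ?_, ?_, hXY, hYZ⟩
    · intro i hi
      simp only [mem_filter, mem_univ, true_and, Finset.mem_compl] at hi ⊢
      exact pointHX _ _ hi
    · intro i hi
      simp only [mem_filter, mem_univ, true_and, Finset.mem_compl] at hi ⊢
      exact pointHY _ _ hi
    · intro i hi
      simp only [mem_filter, mem_univ, true_and, Finset.mem_compl] at hi ⊢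
      exact pointHZ _ _ hi
  · rintro ⟨S, X, Y, Z⟩ hq
    simp only [Finset.coe_filter, Set.mem_setOf_eq, mem_coe, mem_filter, mem_univ, true_and] at hq ⊢
    obtain ⟨hScard, hX, hY, hZ, hXY, hYZ⟩ := hq
    have hset : (univ.filter fun i =>
        (if i ∈ S then (0:Fin 3) else recA (decide (i ∈ X)) (decide (i ∈ Y)) (decide (i ∈ Z))) = 0 ∧
        (if i ∈ S then (0:Fin 3) else recB (decide (i ∈ X)) (decide (i ∈ Y)) (decide (i ∈ Z))) = 0)
        = S := by
      ext i
      simp only [mem_filter, mem_univ, true_and]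
      by_cases h : i ∈ S
      · simp [h]
      · simp only [if_neg h]
        exact iff_of_false (pointS _ _ _) h
    exact ⟨counts_w S X Y Z hX hY hZ hXY hYZ, by rw [hset]; exact hScard⟩
  · rintro ⟨w, w'⟩ hp
    simp only [Finset.coe_filter, Set.mem_setOf_eq, mem_coe, mem_filter, mem_univ, true_and] at hp
    refine Prod.ext ?_ ?_ <;> funext i <;>
      simp only [mem_filter, mem_univ, true_and] <;>
      by_cases h : w i = 0 ∧ w' i = 0
    · simp only [if_pos h]; exact h.1.symm
    · simp only [if_neg h]; exact pointA (w i) (w' i) h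
    · simp only [if_pos h]; exact h.2.symm
    · simp only [if_neg h]; exact pointB (w i) (w' i) h
  · rintro ⟨S, X, Y, Z⟩ hq
    simp only [Finset.coe_filter, Set.mem_setOf_eq, mem_coe, mem_filter, mem_univ, true_and] at hq
    obtain ⟨hScard, hX, hY, hZ, hXY, hYZ⟩ := hq
    dsimp only
    refine Prod.ext ?_ (Prod.ext ?_ (Prod.ext ?_ ?_)) <;> dsimp only <;> ext i <;>
        simp only [mem_filter, mem_univ, true_and] <;> by_cases h : i ∈ S <;>
      first
        | (simp only [if_pos h];
           first
             | exact iff_of_true (by simp) h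
             | exact iff_of_false (by decide) (fun hm => (Finset.mem_compl.mp (hX hm)) h)
             | exact iff_of_false (by decide) (fun hm => (Finset.mem_compl.mp (hY hm)) h)
             | exact iff_of_false (by decide) (fun hm => (Finset.mem_compl.mp (hZ hm)) h))
        | (simp only [if_neg h];
           first
             | exact iff_of_false (pointS _ _ _) h
             | exact (pointX _ _ _).trans (by simp)
             | exact (pointY _ _ _).trans (by simp)
             | exact (pointZ _ _ _).trans (by simp))
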